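/- Let ρ > 0, z > 0, and u_l ∈ ℝ². Define h(u) = 1/(ρ‖u‖² + z) + ρ‖u‖²/z² - B̄⟨u, u_l⟩ - C̄ with B̄ = 2ρ(1/z² - 1/(ρ‖u_l‖² + z)²) and C̄ = 1/(ρ‖u_l‖² + z) + 2ρ‖u_l‖²/(ρ‖u_l‖² + z)² - ρ‖u_l‖²/z². Then h attains its global minimum value 0 at u = u_l. -/

import Mathlib

lemma aux_h1 (ρ z a b t : ℝ) (hρ : 0 < ρ) (hz : 0 < z) (ha : 0 ≤ a) (hb : 0 ≤ b)
    (ht : t ≤ a * b) :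
    0 ≤ 1 / (ρ * a ^ 2 + z) + ρ * a ^ 2 / z ^ 2
          - (2 * ρ * (1 / z ^ 2 - 1 / (ρ * b ^ 2 + z) ^ 2)) * t
          - (1 / (ρ * b ^ 2 + z) + 2 * ρ * b ^ 2 / (ρ * b ^ 2 + z) ^ 2
              - ρ * b ^ 2 / z ^ 2) := by
  have hP : 0 < ρ * a ^ 2 + z := by positivity
  have hQ : 0 < ρ * b ^ 2 + z := by positivity
  have hE : 1 / (ρ * a ^ 2 + z) + ρ * a ^ 2 / z ^ 2
          - (2 * ρ * (1 / z ^ 2 - 1 / (ρ * b ^ 2 + z) ^ 2)) * t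
          - (1 / (ρ * b ^ 2 + z) + 2 * ρ * b ^ 2 / (ρ * b ^ 2 + z) ^ 2
              - ρ * b ^ 2 / z ^ 2)
        = (ρ * (ρ * b ^ 2) * ((ρ * b ^ 2 + z) + z) * (a ^ 2 + b ^ 2 - 2 * t)
              * (ρ * a ^ 2 + z)
            + z ^ 2 * ((ρ * a ^ 2 + z) - (ρ * b ^ 2 + z)) ^ 2)
          / (z ^ 2 * (ρ * b ^ 2 + z) ^ 2 * (ρ * a ^ 2 + z)) := by
    field_simp
    ring
  rw [hE]
  apply div_nonneg _ (by positivity)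
  have h2 : a ^ 2 + b ^ 2 - 2 * t ≥ 0 := by nlinarith [sq_nonneg (a - b)]
  positivity

theorem h1_global_min_at_ul (ρ z : ℝ) (hρ : 0 < ρ) (hz : 0 < z)
    (ul : EuclideanSpace ℝ (Fin 2)) :
    (fun u : EuclideanSpace ℝ (Fin 2) =>
        1 / (ρ * ‖u‖ ^ 2 + z) + ρ * ‖u‖ ^ 2 / z ^ 2
          - (2 * ρ * (1 / z ^ 2 - 1 / (ρ * ‖ul‖ ^ 2 + z) ^ 2)) * (inner ℝ u ul : ℝ)
          - (1 / (ρ * ‖ul‖ ^ 2 + z) + 2 * ρ * ‖ul‖ ^ 2 / (ρ * ‖ul‖ ^ 2 + z) ^ 2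
              - ρ * ‖ul‖ ^ 2 / z ^ 2)) ul = 0 ∧
    ∀ u : EuclideanSpace ℝ (Fin 2),
      0 ≤ 1 / (ρ * ‖u‖ ^ 2 + z) + ρ * ‖u‖ ^ 2 / z ^ 2
          - (2 * ρ * (1 / z ^ 2 - 1 / (ρ * ‖ul‖ ^ 2 + z) ^ 2)) * (inner ℝ u ul : ℝ)
          - (1 / (ρ * ‖ul‖ ^ 2 + z) + 2 * ρ * ‖ul‖ ^ 2 / (ρ * ‖ul‖ ^ 2 + z) ^ 2
              - ρ * ‖ul‖ ^ 2 / z ^ 2) := by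
  constructor
  · have hQ : 0 < ρ * ‖ul‖ ^ 2 + z := by positivity
    simp only [real_inner_self_eq_norm_sq]
    field_simp
    ring
  · intro u
    exact aux_h1 ρ z ‖u‖ ‖ul‖ _ hρ hz (norm_nonneg u) (norm_nonneg ul)
      (real_inner_le_norm u ul)
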